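/- Let K be a field and let R be an infinite-dimensional affine K-algebra without zero divisors. If R is not amenable, then R is paradoxical. -/
import Mathlib



open Filter Module Submodule Pointwise

/-- `W·r`: the image of the finite dimensional subspace `W` under right multiplication
by `r`. -/
noncomputable def rightMulSubmodule (K : Type*) [Field K] {R : Type*} [Ring R] [Algebra K R]
    (W : Submodule K R) (r : R) : Submodule K R :=
  W.map (LinearMap.mulRight K r)

/-- A Følner exhaustion of a `K`-algebra `R`: an increasing sequence of finite dimensional
subspaces exhausting `R` such that for every `r ∈ R`,
`dim (Wₙ·r + Wₙ) / dim Wₙ → 1`. -/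
def FolnerExhaustion (K : Type*) [Field K] (R : Type*) [Ring R] [Algebra K R]
    (W : ℕ → Submodule K R) : Prop :=
  Monotone W ∧ (∀ n, FiniteDimensional K (W n)) ∧ (∀ x : R, ∃ n, x ∈ W n) ∧
    ∀ r : R,
      Tendsto (fun n => (finrank K ↥(rightMulSubmodule K (W n) r ⊔ W n) : ℝ) / finrank K (W n))
        atTop (nhds 1)

/-- An affine algebra is (left) amenable if it admits a Følner exhaustion. -/
def AmenableAlgebra (K : Type*) [Field K] (R : Type*) [Ring R] [Algebra K R] : Prop :=
  ∃ W : ℕ → Submodule K R, FolnerExhaustion K R W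


/-- `R` is paradoxical if every `K`-basis `{fᵢ}` of `R` indexed by `ℕ` can be partitioned into
finitely many pieces `A₁, …, A_m` for which there exist nonzero `g₁, h₁, …, g_m, h_m ∈ R` such
that the combined family of elements `a·gⱼ` and `a·hⱼ` (`a ∈ Aⱼ`) is linearly independent. -/
def ParadoxicalAlgebra (K : Type*) [Field K] (R : Type*) [Ring R] [Algebra K R] : Prop :=
  ∀ f : Basis ℕ K R, ∃ (m : ℕ) (A : Fin m → Set ℕ) (g h : Fin m → R),
    (∀ i, g i ≠ 0) ∧ (∀ i, h i ≠ 0) ∧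
    (⋃ i, A i) = Set.univ ∧
    Pairwise (Function.onFun Disjoint A) ∧
    LinearIndependent K (fun p : (i : Fin m) × (↥(A i) × Bool) =>
      f (p.2.1 : ℕ) * (cond p.2.2 (g p.1) (h p.1)))

section aux
variable {K : Type*} [Field K] {R : Type*} [Ring R] [Algebra K R]

lemma finrank_map_mulLeft_eq [NoZeroDivisors R] {w : R} (hw : w ≠ 0) (p : Submodule K R) :
    finrank K (p.map (LinearMap.mulLeft K w)) = finrank K p := by
  have hinj : Function.Injective (LinearMap.mulLeft K w) := fun a b hab =>
    mul_left_cancel₀ hw hab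
  exact (LinearEquiv.finrank_eq (Submodule.equivMapOfInjective _ hinj p)).symm

lemma one_mem_pow {T : Submodule K R} (h1 : 1 ∈ T) (n : ℕ) : (1 : R) ∈ T ^ n := by
  induction n with
  | zero => rw [pow_zero]; exact Submodule.one_le.mp le_rfl
  | succ n ih => rw [pow_succ]; simpa using Submodule.mul_mem_mul ih h1

lemma pow_mono' {T : Submodule K R} (h1 : 1 ∈ T) : Monotone fun n => T ^ n :=
  monotone_nat_of_le_succ fun n x hx => by
    rw [pow_succ]; simpa using Submodule.mul_mem_mul hx h1

lemma fd_mul (p q : Submodule K R) [FiniteDimensional K p] [FiniteDimensional K q] :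
    FiniteDimensional K ↥(p * q) := by
  rw [← Submodule.fg_iff_finiteDimensional]
  exact Submodule.FG.mul ((Submodule.fg_iff_finiteDimensional p).mpr ‹_›)
    ((Submodule.fg_iff_finiteDimensional q).mpr ‹_›)

lemma fd_map (p : Submodule K R) [FiniteDimensional K p] (f : R →ₗ[K] R) :
    FiniteDimensional K ↥(p.map f) :=
  Module.Finite.map p f

/-- bound on the Følner quotient of any finite dimensional space -/
lemma brm (X : Submodule K R) [FiniteDimensional K X] (r : R) :
    finrank K ↥(rightMulSubmodule K X r ⊔ X) ≤ 2 * finrank K ↥X := by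
  haveI : FiniteDimensional K ↥(rightMulSubmodule K X r) := fd_map X (LinearMap.mulRight K r)
  calc finrank K ↥(rightMulSubmodule K X r ⊔ X)
      ≤ finrank K ↥(rightMulSubmodule K X r) + finrank K ↥X :=
        Submodule.finrank_add_le_finrank_add_finrank _ _
    _ ≤ finrank K ↥X + finrank K ↥X := by
        have : finrank K ↥(rightMulSubmodule K X r) ≤ finrank K ↥X :=
          Submodule.finrank_map_le _ X
        omega
    _ = 2 * finrank K ↥X := by ring

set_option maxHeartbeats 1000000 in
lemma build_amenable [NoZeroDivisors R] [Nontrivial R]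
    (T : Submodule K R) (hT1 : (1 : R) ∈ T)
    (hEfd : ∀ n : ℕ, FiniteDimensional K ↥(T ^ n))
    (hEmem : ∀ x : R, ∃ n, x ∈ T ^ n)
    (hbig : ∀ D : ℕ, ∃ m, D ≤ finrank K ↥(T ^ m))
    (hH : ∀ m : ℕ, ∃ V : Submodule K R, FiniteDimensional K ↥V ∧ V ≠ ⊥ ∧
      ((finrank K ↥(V * T ^ m) : ℝ) < (1 + 1 / (m + 1)) * finrank K ↥V)) :
    AmenableAlgebra K R := by
  classical
  haveI := hEfd
  -- Step: Følner subspaces of arbitrarily large dimension and good constant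
  have hstep : ∀ n D₀ : ℕ, ∃ (V : Submodule K R) (m : ℕ), n ≤ m ∧ FiniteDimensional K ↥V ∧
      D₀ ≤ finrank K ↥V ∧
      ∀ r ∈ T ^ m, (finrank K ↥(rightMulSubmodule K V r ⊔ V) : ℝ)
        ≤ (1 + 1 / (n + 1)) * finrank K ↥V := by
    intro n D₀
    obtain ⟨m₀, hm₀⟩ := hbig (2 * D₀)
    set m := max n m₀ with hm
    obtain ⟨V, hVfd, hVne, hVexp⟩ := hH m
    haveI := hVfd
    haveI := hEfd m
    haveI : FiniteDimensional K ↥(V * T ^ m) := fd_mul V (T ^ m)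
    -- dimension of T^m is at most twice that of V
    obtain ⟨w, hwV, hw0⟩ := Submodule.exists_mem_ne_zero_of_ne_bot hVne
    have hwmap : (T ^ m).map (LinearMap.mulLeft K w) ≤ V * T ^ m := by
      rintro z ⟨x, hx, rfl⟩
      exact Submodule.mul_mem_mul hwV hx
    have hTm_le : finrank K ↥(T ^ m) ≤ finrank K ↥(V * T ^ m) := by
      rw [← finrank_map_mulLeft_eq (K := K) hw0 (T ^ m)]
      exact Submodule.finrank_mono hwmap
    have hexp2 : (finrank K ↥(V * T ^ m) : ℝ) < 2 * finrank K ↥V := by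
      refine lt_of_lt_of_le hVexp ?_
      have h1 : (1 : ℝ) + 1 / (m + 1) ≤ 2 := by
        have hp : (0:ℝ) < (m:ℝ) + 1 := by positivity
        have h2 : 1 / ((m:ℝ) + 1) ≤ 1 := by
          rw [div_le_one hp]
          have : (0:ℝ) ≤ (m:ℝ) := Nat.cast_nonneg m
          linarith
        linarith
      have : (0:ℝ) ≤ (finrank K ↥V : ℝ) := by positivity
      nlinarith
    have hD : D₀ ≤ finrank K ↥V := by
      have h1 : (2 * D₀ : ℝ) ≤ finrank K ↥(T ^ m) := by
        have : 2 * D₀ ≤ finrank K ↥(T ^ m) :=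
          le_trans hm₀ (Submodule.finrank_mono (pow_mono' hT1 (le_max_right n m₀)))
        exact_mod_cast this
      have h2 : (finrank K ↥(T ^ m) : ℝ) ≤ finrank K ↥(V * T ^ m) := by exact_mod_cast hTm_le
      have : (D₀ : ℝ) ≤ finrank K ↥V := by nlinarith
      exact_mod_cast this
    refine ⟨V, m, le_max_left n m₀, hVfd, hD, ?_⟩
    intro r hr
    have hsub : rightMulSubmodule K V r ⊔ V ≤ V * T ^ m := by
      apply sup_le
      · rintro z ⟨x, hx, rfl⟩
        exact Submodule.mul_mem_mul hx hr
      · intro x hx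
        simpa using Submodule.mul_mem_mul hx (one_mem_pow hT1 m)
    have h1 : finrank K ↥(rightMulSubmodule K V r ⊔ V) ≤ finrank K ↥(V * T ^ m) :=
      Submodule.finrank_mono hsub
    have h2 : (1 : ℝ) + 1 / (m + 1) ≤ 1 + 1 / (n + 1) := by
      have hmn : (n : ℝ) + 1 ≤ (m:ℝ) + 1 := by
        have h := le_max_left n m₀
        rw [← hm] at h
        exact_mod_cast Nat.add_le_add_right h 1
      have h0 : (0:ℝ) < (n:ℝ) + 1 := by positivity
      have h0' : (0:ℝ) < (m:ℝ) + 1 := by positivity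
      have := one_div_le_one_div_of_le h0 hmn
      linarith
    calc (finrank K ↥(rightMulSubmodule K V r ⊔ V) : ℝ)
        ≤ finrank K ↥(V * T ^ m) := by exact_mod_cast h1
      _ ≤ (1 + 1 / (m + 1)) * finrank K ↥V := le_of_lt hVexp
      _ ≤ (1 + 1 / (n + 1)) * finrank K ↥V := by
          have : (0:ℝ) ≤ (finrank K ↥V : ℝ) := by positivity
          nlinarith
  choose Vf mf hmge hVfd hVD hVFol using hstep
  -- the recursively defined exhaustion
  let D : Submodule K R → ℕ → ℕ := fun W k =>
    (k + 2) * (2 * finrank K ↥W + 2 * finrank K ↥(T ^ (k + 1)) + 1)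
  obtain ⟨F, hF0, hFs⟩ : ∃ F : ℕ → Submodule K R, F 0 = ⊥ ∧
      ∀ k, F (k + 1) = (F k ⊔ Vf (k + 1) (D (F k) k)) ⊔ T ^ (k + 1) :=
    ⟨fun n => Nat.rec ⊥ (fun k Wk => (Wk ⊔ Vf (k + 1) (D Wk k)) ⊔ T ^ (k + 1)) n,
      rfl, fun k => rfl⟩
  have hFfd : ∀ n, FiniteDimensional K ↥(F n) := by
    intro n
    induction n with
    | zero => rw [hF0]; infer_instance
    | succ k ih =>
      rw [hFs k]
      haveI := ih
      haveI := hVfd (k + 1) (D (F k) k)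
      haveI := hEfd (k + 1)
      infer_instance
  have hFmono : Monotone F := by
    apply monotone_nat_of_le_succ
    intro k
    rw [hFs k]
    exact le_trans le_sup_left le_sup_left
  have hFexh : ∀ x : R, ∃ n, x ∈ F n := by
    intro x
    obtain ⟨n, hn⟩ := hEmem x
    refine ⟨n + 1, ?_⟩
    rw [hFs n]
    exact Submodule.mem_sup_right (pow_mono' hT1 (Nat.le_succ n) hn)
  have hFpos : ∀ k, 1 ≤ finrank K ↥(F (k + 1)) := by
    intro k
    haveI := hFfd (k + 1)
    haveI := hVfd (k + 1) (D (F k) k)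
    have h1 : Vf (k + 1) (D (F k) k) ≤ F (k + 1) := by
      rw [hFs k]; exact le_trans le_sup_right le_sup_left
    have h2 : 1 ≤ D (F k) k := Nat.mul_pos (by omega) (by omega)
    exact le_trans (le_trans h2 (hVD (k + 1) (D (F k) k))) (Submodule.finrank_mono h1)
  refine ⟨F, hFmono, hFfd, hFexh, ?_⟩
  intro r
  obtain ⟨n₀, hn₀⟩ := hEmem r
  -- upper bound for the ratio
  have hub : ∀ k, n₀ ≤ k →
      (finrank K ↥(rightMulSubmodule K (F (k+1)) r ⊔ F (k+1)) : ℝ) / finrank K ↥(F (k+1))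
        ≤ 1 + 2 / (k + 2) := by
    intro k hk
    haveI := hFfd k
    haveI := hFfd (k + 1)
    haveI := hEfd (k + 1)
    set V := Vf (k + 1) (D (F k) k) with hV
    haveI := hVfd (k + 1) (D (F k) k)
    set a := finrank K ↥(F k) with ha
    set b := finrank K ↥(T ^ (k + 1)) with hb
    -- r is in T ^ (mf ...)
    have hrm : r ∈ T ^ (mf (k + 1) (D (F k) k)) := by
      refine pow_mono' hT1 ?_ hn₀
      exact le_trans (le_trans hk (Nat.le_succ k)) (hmge (k + 1) (D (F k) k))
    have hfol := hVFol (k + 1) (D (F k) k) r hrm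
    -- decompose
    have hdec : rightMulSubmodule K (F (k+1)) r ⊔ F (k+1) ≤
        ((rightMulSubmodule K (F k) r ⊔ F k) ⊔ (rightMulSubmodule K V r ⊔ V)) ⊔
          (rightMulSubmodule K (T ^ (k+1)) r ⊔ T ^ (k+1)) := by
      rw [hFs k, ← hV]
      unfold rightMulSubmodule
      rw [Submodule.map_sup, Submodule.map_sup]
      -- pure lattice fact
      apply sup_le
      · apply sup_le
        · apply sup_le
          · exact le_trans le_sup_left (le_trans le_sup_left le_sup_left)
          · exact le_trans le_sup_left (le_trans le_sup_right le_sup_left)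
        · exact le_trans le_sup_left le_sup_right
      · apply sup_le
        · apply sup_le
          · exact le_trans le_sup_right (le_trans le_sup_left le_sup_left)
          · exact le_trans le_sup_right (le_trans le_sup_right le_sup_left)
        · exact le_trans le_sup_right le_sup_right
    haveI i1a : FiniteDimensional K ↥(rightMulSubmodule K (F k) r) :=
      fd_map (F k) (LinearMap.mulRight K r)
    haveI i2a : FiniteDimensional K ↥(rightMulSubmodule K V r) :=
      fd_map V (LinearMap.mulRight K r)
    haveI i3a : FiniteDimensional K ↥(rightMulSubmodule K (T ^ (k+1)) r) :=
      fd_map (T ^ (k+1)) (LinearMap.mulRight K r)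
    have hnum : finrank K ↥(rightMulSubmodule K (F (k+1)) r ⊔ F (k+1)) ≤
        2 * a + finrank K ↥(rightMulSubmodule K V r ⊔ V) + 2 * b := by
      calc finrank K ↥(rightMulSubmodule K (F (k+1)) r ⊔ F (k+1))
          ≤ finrank K ↥(((rightMulSubmodule K (F k) r ⊔ F k) ⊔
              (rightMulSubmodule K V r ⊔ V)) ⊔
              (rightMulSubmodule K (T ^ (k+1)) r ⊔ T ^ (k+1))) :=
            Submodule.finrank_mono hdec
        _ ≤ finrank K ↥((rightMulSubmodule K (F k) r ⊔ F k) ⊔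
              (rightMulSubmodule K V r ⊔ V)) +
              finrank K ↥(rightMulSubmodule K (T ^ (k+1)) r ⊔ T ^ (k+1)) :=
            Submodule.finrank_add_le_finrank_add_finrank _ _
        _ ≤ finrank K ↥(rightMulSubmodule K (F k) r ⊔ F k) +
              finrank K ↥(rightMulSubmodule K V r ⊔ V) +
              finrank K ↥(rightMulSubmodule K (T ^ (k+1)) r ⊔ T ^ (k+1)) := by
            have := Submodule.finrank_add_le_finrank_add_finrank
              (rightMulSubmodule K (F k) r ⊔ F k) (rightMulSubmodule K V r ⊔ V)
            omega
        _ ≤ 2 * a + finrank K ↥(rightMulSubmodule K V r ⊔ V) + 2 * b := by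
            have h1 := brm (F k) r
            have h2 := brm (T ^ (k+1)) r
            omega
    -- real bound
    set fV := finrank K ↥V with hfV
    have hDpos : 1 ≤ D (F k) k := Nat.mul_pos (by omega) (by omega)
    have hfV_lb : D (F k) k ≤ fV := hVD (k + 1) (D (F k) k)
    have hfV_pos : (0:ℝ) < fV := by
      have : 1 ≤ fV := le_trans hDpos hfV_lb
      exact_mod_cast Nat.lt_of_lt_of_le Nat.zero_lt_one this
    have hVle : fV ≤ finrank K ↥(F (k+1)) := by
      apply Submodule.finrank_mono
      rw [hFs k, ← hV]
      exact le_trans le_sup_right le_sup_left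
    have hden_pos : (0:ℝ) < (finrank K ↥(F (k+1)) : ℝ) := by
      have := hFpos k
      exact_mod_cast Nat.lt_of_lt_of_le Nat.zero_lt_one this
    rw [div_le_iff₀ hden_pos]
    have hnumR : (finrank K ↥(rightMulSubmodule K (F (k+1)) r ⊔ F (k+1)) : ℝ) ≤
        (1 + 1 / (k + 2)) * fV + (2 * a + 2 * b + 1) := by
      have := hfol
      have hcast : (finrank K ↥(rightMulSubmodule K (F (k+1)) r ⊔ F (k+1)) : ℝ) ≤
          2 * a + (finrank K ↥(rightMulSubmodule K V r ⊔ V) : ℝ) + 2 * b := by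
        exact_mod_cast hnum
      push_cast at this
      have hk2 : ((k:ℝ) + 1 + 1) = (k:ℝ) + 2 := by ring
      rw [hk2] at this
      linarith
    have hextra : (2 * a + 2 * b + 1 : ℝ) ≤ fV / (k + 2) := by
      have h1' := hfV_lb
      simp only [D] at h1'
      rw [← ha, ← hb] at h1'
      have h1 : ((k:ℝ) + 2) * (2 * a + 2 * b + 1) ≤ fV := by exact_mod_cast h1'
      have h2 : (0:ℝ) < (k:ℝ) + 2 := by positivity
      rw [le_div_iff₀ h2]
      nlinarith
    have hk2pos : (0:ℝ) < (k:ℝ) + 2 := by positivity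
    calc (finrank K ↥(rightMulSubmodule K (F (k+1)) r ⊔ F (k+1)) : ℝ)
        ≤ (1 + 1 / (k + 2)) * fV + fV / (k + 2) := le_trans hnumR (by linarith)
      _ = (1 + 2 / (k + 2)) * fV := by field_simp; ring
      _ ≤ (1 + 2 / (k + 2)) * (finrank K ↥(F (k+1)) : ℝ) := by
          have hc : (0:ℝ) ≤ 1 + 2 / ((k:ℝ) + 2) := by positivity
          have : (fV : ℝ) ≤ (finrank K ↥(F (k+1)) : ℝ) := by exact_mod_cast hVle
          nlinarith
  -- lower bound: ratio ≥ 1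
  have hlb : ∀ k : ℕ,
      (1:ℝ) ≤ (finrank K ↥(rightMulSubmodule K (F (k+1)) r ⊔ F (k+1)) : ℝ) /
        finrank K ↥(F (k+1)) := by
    intro k
    haveI := hFfd (k + 1)
    haveI : FiniteDimensional K ↥(rightMulSubmodule K (F (k+1)) r) :=
      fd_map (F (k+1)) (LinearMap.mulRight K r)
    have hden_pos : (0:ℝ) < (finrank K ↥(F (k+1)) : ℝ) := by
      have := hFpos k
      exact_mod_cast Nat.lt_of_lt_of_le Nat.zero_lt_one this
    rw [le_div_iff₀ hden_pos, one_mul]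
    have : finrank K ↥(F (k+1)) ≤ finrank K ↥(rightMulSubmodule K (F (k+1)) r ⊔ F (k+1)) :=
      Submodule.finrank_mono le_sup_right
    exact_mod_cast this
  -- squeeze
  have hupper : Tendsto (fun n : ℕ => 1 + 2 / ((n:ℝ) + 1)) atTop (nhds 1) := by
    have h0 : Tendsto (fun n : ℕ => 2 / ((n:ℝ) + 1)) atTop (nhds 0) := by
      apply Filter.Tendsto.div_atTop (tendsto_const_nhds (x := (2:ℝ)))
      exact Filter.tendsto_atTop_add_const_right _ _ tendsto_natCast_atTop_atTop
    simpa using (tendsto_const_nhds (x := (1:ℝ))).add h0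
  apply tendsto_of_tendsto_of_tendsto_of_le_of_le' (tendsto_const_nhds) hupper
  · filter_upwards [eventually_ge_atTop 1] with n hn
    rcases n with _ | k
    · omega
    · exact hlb k
  · filter_upwards [eventually_ge_atTop (n₀ + 1)] with n hn
    rcases n with _ | k
    · omega
    · have hcast : ((k+1:ℕ):ℝ) + 1 = (k:ℝ) + 2 := by push_cast; ring
      rw [hcast]
      exact hub k (by omega)

end aux


section rado
variable {K : Type*} [Field K] {V : Type*} [AddCommGroup V] [Module K V]

lemma rado_finite {ι κ : Type*} [Fintype ι] [DecidableEq ι] [DecidableEq κ] [DecidableEq V]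
    (v : ι → κ → V) :
    ∀ (N : ℕ) (B : ι → Finset κ), (∑ i, (B i).card) ≤ N →
    (∀ s : Finset ι,
      s.card ≤ finrank K (span K ((s.biUnion fun i => (B i).image (v i)) : Set V))) →
    ∃ c : ι → κ, (∀ i, c i ∈ B i) ∧ LinearIndependent K (fun i => v i (c i)) := by
  intro N
  induction N with
  | zero =>
    intro B hsum hB
    -- all B i must be nonempty, but the sum is 0, so ι is empty
    have hempty : IsEmpty ι := by
      by_contra h
      rw [not_isEmpty_iff] at h
      obtain ⟨i⟩ := h
      have h1 := hB {i}
      have hBi : B i = ∅ := by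
        have := Finset.sum_eq_zero_iff.mp (Nat.le_zero.mp hsum) i (Finset.mem_univ i)
        exact Finset.card_eq_zero.mp this
      simp [hBi] at h1
    refine ⟨fun i => (hempty.elim i), fun i => (hempty.elim i), linearIndependent_empty_type⟩
  | succ N ih =>
    intro B hsum hB
    have hne : ∀ i, (B i).Nonempty := by
      intro i
      rcases Finset.eq_empty_or_nonempty (B i) with h | h
      · exfalso; have h1 := hB {i}; simp [h] at h1
      · exact h
    by_cases hone : ∀ i, (B i).card ≤ 1
    · -- all singletons: forced transversal
      have hsingle : ∀ i, ∃ b, B i = {b} := fun i =>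
        Finset.card_eq_one.mp (le_antisymm (hone i) (Finset.Nonempty.card_pos (hne i)))
      choose c hc using hsingle
      refine ⟨c, fun i => by simp [hc i], ?_⟩
      have hspan : ((Finset.univ.biUnion fun i => (B i).image (v i)) : Set V)
          = Set.range fun i => v i (c i) := by
        ext z
        simp only [Finset.coe_biUnion, Finset.coe_univ, Set.mem_univ, Set.iUnion_true,
          Set.mem_iUnion, Finset.coe_image, Set.mem_image, Finset.mem_coe, Set.mem_range]
        constructor
        · rintro ⟨i, j, hj, rfl⟩
          rw [hc i, Finset.mem_singleton] at hj
          exact ⟨i, by rw [hj]⟩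
        · rintro ⟨i, rfl⟩
          exact ⟨i, c i, by simp [hc i], rfl⟩
      have h1 := hB Finset.univ
      rw [Finset.card_univ, hspan] at h1
      rw [linearIndependent_iff_card_eq_finrank_span]
      refine le_antisymm h1 ?_
      have : Set.range (fun i => v i (c i)) = ↑(Finset.univ.image fun i => v i (c i)) := by
        simp
      rw [this]
      exact le_trans (finrank_span_finset_le_card _) (Finset.card_image_le.trans (by simp))
    · push_neg at hone
      obtain ⟨i₀, hi₀⟩ := hone
      obtain ⟨x, hx, y, hy, hxy⟩ := Finset.one_lt_card.mp hi₀
      -- helper: sum decreases when erasing an element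
      have hsum' : ∀ z ∈ B i₀, (∑ i, ((Function.update B i₀ ((B i₀).erase z)) i).card) ≤ N := by
        intro z hz
        have hupd : (∑ i, ((Function.update B i₀ ((B i₀).erase z)) i).card)
            = ((B i₀).erase z).card + ∑ i ∈ Finset.univ.erase i₀, (B i).card := by
          rw [← Finset.add_sum_erase _ _ (Finset.mem_univ i₀)]
          congr 1
          · simp
          · apply Finset.sum_congr rfl
            intro i hi
            rw [Function.update_of_ne (Finset.ne_of_mem_erase hi)]
        have horig : (∑ i, (B i).card) = (B i₀).card + ∑ i ∈ Finset.univ.erase i₀, (B i).card :=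
          (Finset.add_sum_erase _ _ (Finset.mem_univ i₀)).symm
        rw [Finset.card_erase_of_mem hz] at hupd
        omega
      -- try deleting x, then y
      by_cases hHx : ∀ s : Finset ι, s.card ≤ finrank K (span K
          ((s.biUnion fun i => ((Function.update B i₀ ((B i₀).erase x)) i).image (v i)) : Set V))
      · obtain ⟨c, hc1, hc2⟩ := ih _ (hsum' x hx) hHx
        refine ⟨c, fun i => ?_, hc2⟩
        have := hc1 i
        by_cases h : i = i₀
        · subst h; rw [Function.update_self] at this; exact Finset.mem_of_mem_erase this
        · rwa [Function.update_of_ne h] at this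
      by_cases hHy : ∀ s : Finset ι, s.card ≤ finrank K (span K
          ((s.biUnion fun i => ((Function.update B i₀ ((B i₀).erase y)) i).image (v i)) : Set V))
      · obtain ⟨c, hc1, hc2⟩ := ih _ (hsum' y hy) hHy
        refine ⟨c, fun i => ?_, hc2⟩
        have := hc1 i
        by_cases h : i = i₀
        · subst h; rw [Function.update_self] at this; exact Finset.mem_of_mem_erase this
        · rwa [Function.update_of_ne h] at this
      -- both deletions fail: contradiction via submodularity
      exfalso
      push_neg at hHx hHy
      obtain ⟨s₁, hs₁⟩ := hHx
      obtain ⟨s₂, hs₂⟩ := hHy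
      set Bx := Function.update B i₀ ((B i₀).erase x) with hBx
      set By := Function.update B i₀ ((B i₀).erase y) with hBy
      have hmem : ∀ (z : κ) (s : Finset ι), i₀ ∉ s →
          (s.biUnion fun i => ((Function.update B i₀ ((B i₀).erase z)) i).image (v i))
          = s.biUnion fun i => (B i).image (v i) := by
        intro z s hs
        apply Finset.biUnion_congr rfl
        intro i hi
        rw [Function.update_of_ne (by rintro rfl; exact hs hi)]
      have hi₀s₁ : i₀ ∈ s₁ := by
        by_contra h
        rw [hmem x s₁ h] at hs₁
        exact absurd (hB s₁) (not_le.mpr hs₁)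
      have hi₀s₂ : i₀ ∈ s₂ := by
        by_contra h
        rw [hmem y s₂ h] at hs₂
        exact absurd (hB s₂) (not_le.mpr hs₂)
      set U₁ := span K ((s₁.biUnion fun i => (Bx i).image (v i)) : Set V) with hU₁
      set U₂ := span K ((s₂.biUnion fun i => (By i).image (v i)) : Set V) with hU₂
      -- U₁ ⊔ U₂ contains the full span over s₁ ∪ s₂
      have hsup : span K (((s₁ ∪ s₂).biUnion fun i => (B i).image (v i)) : Set V) ≤ U₁ ⊔ U₂ := by
        rw [span_le]
        intro z hz
        simp only [Finset.coe_biUnion, Set.mem_iUnion, Finset.mem_coe, Finset.coe_image,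
          Set.mem_image] at hz
        obtain ⟨i, hi, j, hj, rfl⟩ := hz
        have mem1 : ∀ i ∈ s₁, ∀ j ∈ Bx i, v i j ∈ U₁ := by
          intro i hi j hj
          apply subset_span
          simp only [Finset.coe_biUnion, Set.mem_iUnion, Finset.mem_coe, Finset.coe_image,
            Set.mem_image]
          exact ⟨i, hi, j, hj, rfl⟩
        have mem2 : ∀ i ∈ s₂, ∀ j ∈ By i, v i j ∈ U₂ := by
          intro i hi j hj
          apply subset_span
          simp only [Finset.coe_biUnion, Set.mem_iUnion, Finset.mem_coe, Finset.coe_image,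
            Set.mem_image]
          exact ⟨i, hi, j, hj, rfl⟩
        rw [Finset.mem_union] at hi
        by_cases hii : i = i₀
        · by_cases hjx : j = x
          · have hj' : x ∈ B i₀ := by rw [← hjx, ← hii]; exact hj
            have : v i j = v i₀ x := by rw [hii, hjx]
            rw [this]
            refine Submodule.mem_sup_right (mem2 i₀ hi₀s₂ x ?_)
            rw [hBy, Function.update_self]
            exact Finset.mem_erase.mpr ⟨hxy, hj'⟩
          · have hj' : j ∈ B i₀ := by rw [← hii]; exact hj
            have : v i j = v i₀ j := by rw [hii]
            rw [this]
            refine Submodule.mem_sup_left (mem1 i₀ hi₀s₁ j ?_)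
            rw [hBx, Function.update_self]
            exact Finset.mem_erase.mpr ⟨hjx, hj'⟩
        · rcases hi with hi | hi
          · refine Submodule.mem_sup_left (mem1 i hi j ?_)
            rw [hBx, Function.update_of_ne hii]; exact hj
          · refine Submodule.mem_sup_right (mem2 i hi j ?_)
            rw [hBy, Function.update_of_ne hii]; exact hj
      -- U₁ ⊓ U₂ contains the full span over (s₁ ∩ s₂).erase i₀
      have hinf : span K ((((s₁ ∩ s₂).erase i₀).biUnion fun i => (B i).image (v i)) : Set V)
          ≤ U₁ ⊓ U₂ := by
        rw [span_le]
        intro z hz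
        simp only [Finset.coe_biUnion, Set.mem_iUnion, Finset.mem_coe, Finset.coe_image,
          Set.mem_image] at hz
        obtain ⟨i, hi, j, hj, rfl⟩ := hz
        have hii : i ≠ i₀ := Finset.ne_of_mem_erase hi
        have hi' := Finset.mem_of_mem_erase hi
        rw [Finset.mem_inter] at hi'
        constructor
        · apply subset_span
          simp only [Finset.coe_biUnion, Set.mem_iUnion, Finset.mem_coe, Finset.coe_image,
            Set.mem_image]
          exact ⟨i, hi'.1, j, by rw [hBx, Function.update_of_ne hii]; exact hj, rfl⟩
        · apply subset_span
          simp only [Finset.coe_biUnion, Set.mem_iUnion, Finset.mem_coe, Finset.coe_image,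
            Set.mem_image]
          exact ⟨i, hi'.2, j, by rw [hBy, Function.update_of_ne hii]; exact hj, rfl⟩
      have key := Submodule.finrank_sup_add_finrank_inf_eq U₁ U₂
      have h1 : (s₁ ∪ s₂).card ≤ finrank K ↥(U₁ ⊔ U₂) :=
        le_trans (hB (s₁ ∪ s₂)) (Submodule.finrank_mono hsup)
      have h2 : ((s₁ ∩ s₂).erase i₀).card ≤ finrank K ↥(U₁ ⊓ U₂) :=
        le_trans (hB _) (Submodule.finrank_mono hinf)
      have h3 : finrank K U₁ ≤ s₁.card - 1 := by omega
      have h4 : finrank K U₂ ≤ s₂.card - 1 := by omega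
      have hcard : (s₁ ∪ s₂).card + (s₁ ∩ s₂).card = s₁.card + s₂.card :=
        Finset.card_union_add_card_inter s₁ s₂
      have hcard2 : ((s₁ ∩ s₂).erase i₀).card = (s₁ ∩ s₂).card - 1 :=
        Finset.card_erase_of_mem (Finset.mem_inter.mpr ⟨hi₀s₁, hi₀s₂⟩)
      have hpos : 1 ≤ (s₁ ∩ s₂).card :=
        Finset.card_pos.mpr ⟨i₀, Finset.mem_inter.mpr ⟨hi₀s₁, hi₀s₂⟩⟩
      have hpos1 : 1 ≤ s₁.card := Finset.card_pos.mpr ⟨i₀, hi₀s₁⟩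
      have hpos2 : 1 ≤ s₂.card := Finset.card_pos.mpr ⟨i₀, hi₀s₂⟩
      omega

end rado


section radoinf
variable {K : Type*} [Field K] {V : Type*} [AddCommGroup V] [Module K V]

lemma rado_finite' {ι κ : Type*} [Fintype ι] [Fintype κ] [DecidableEq V] (v : ι → κ → V)
    (hB : ∀ s : Finset ι, s.card ≤ finrank K (span K
      ((s.biUnion fun i => Finset.univ.image (v i)) : Set V))) :
    ∃ c : ι → κ, LinearIndependent K (fun i => v i (c i)) := by
  classical
  obtain ⟨c, -, hc⟩ := rado_finite v (∑ _i : ι, (Finset.univ : Finset κ).card)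
    (fun _ => Finset.univ) le_rfl (fun s => hB s)
  exact ⟨c, hc⟩

lemma rado_infinite {t : ℕ} [DecidableEq V] (v : ℕ × Bool → Fin t → V)
    (h : ∀ s : Finset (ℕ × Bool), s.card ≤ finrank K (span K
      ((s.biUnion fun i => Finset.univ.image (v i)) : Set V))) :
    ∃ c : ℕ × Bool → Fin t, LinearIndependent K (fun i => v i (c i)) := by
  classical
  -- t is positive
  have ht : 0 < t := by
    rcases Nat.eq_zero_or_pos t with h0 | h0
    · subst h0
      have h1 := h {(0, true)}
      simp [Finset.univ_eq_empty] at h1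
    · exact h0
  have : NeZero t := ⟨by omega⟩
  -- enumeration of ℕ × Bool
  set e : ℕ × Bool ≃ ℕ := (Equiv.prodComm ℕ Bool).trans Equiv.boolProdNatEquivNat with he
  set S : ℕ → Finset (ℕ × Bool) := fun n => (Finset.range n).image e.symm with hS
  have hmemS : ∀ (i : ℕ × Bool) (n : ℕ), i ∈ S n ↔ e i < n := by
    intro i n
    simp only [hS, Finset.mem_image, Finset.mem_range]
    constructor
    · rintro ⟨a, ha, rfl⟩; simpa using ha
    · intro hi; exact ⟨e i, hi, by simp⟩
  -- for each n, a partial transversal on S n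
  have hpart : ∀ n : ℕ, ∃ c : ℕ × Bool → Fin t,
      ∀ F : Finset (ℕ × Bool), F ⊆ S n → LinearIndependent K (fun i : ↥F => v i.1 (c i.1)) := by
    intro n
    have hcond : ∀ s : Finset ↥(S n : Finset (ℕ × Bool)), s.card ≤ finrank K (span K
        ((s.biUnion fun i => Finset.univ.image (v i.1)) : Set V)) := by
      intro s
      have hcard : s.card = (s.image Subtype.val).card :=
        (Finset.card_image_of_injective s Subtype.val_injective).symm
      have hbu : ((s.image Subtype.val).biUnion fun i => Finset.univ.image (v i))
          = s.biUnion fun i => Finset.univ.image (v i.1) := by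
        rw [Finset.image_biUnion]
      rw [hcard, ← hbu]
      exact h _
    obtain ⟨c', hc'⟩ := rado_finite' (fun (i : ↥(S n)) (j : Fin t) => v i.1 j) hcond
    refine ⟨fun i => if hi : i ∈ S n then c' ⟨i, hi⟩ else 0, ?_⟩
    intro F hF
    have hinj : Function.Injective (fun i : ↥F => (⟨i.1, hF i.2⟩ : ↥(S n))) := by
      intro a b hab
      rwa [Subtype.mk.injEq, ← Subtype.ext_iff] at hab
    have := hc'.comp (fun i : ↥F => (⟨i.1, hF i.2⟩ : ↥(S n))) hinj
    convert this using 1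
    funext i
    simp only [Function.comp]
    rw [dif_pos (hF i.2)]
  choose cs hcs using hpart
  -- ultrafilter limit
  set U : Ultrafilter ℕ := Filter.hyperfilter ℕ with hU
  have hlim : ∀ i : ℕ × Bool, ∃ j : Fin t, {n | cs n i = j} ∈ U := by
    intro i
    have huniv : (⋃ j ∈ (Set.univ : Set (Fin t)), {n | cs n i = j}) ∈ U := by
      have : (⋃ j ∈ (Set.univ : Set (Fin t)), {n | cs n i = j}) = Set.univ := by
        ext n; simp
      rw [this]; exact Filter.univ_mem
    rw [Ultrafilter.finite_biUnion_mem_iff Set.finite_univ] at huniv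
    obtain ⟨j, _, hj⟩ := huniv
    exact ⟨j, hj⟩
  choose c hc using hlim
  refine ⟨c, ?_⟩
  rw [linearIndependent_iff_finset_linearIndependent]
  intro F
  -- find n that agrees with c on F and with F ⊆ S n
  have hA : (⋂ i ∈ F, {n | cs n i = c i}) ∈ U := (Filter.biInter_finset_mem F).mpr fun i _ => hc i
  have hB2 : {n | ∀ i ∈ F, e i < n} ∈ U := by
    apply Nat.hyperfilter_le_atTop
    rcases F.eq_empty_or_nonempty with hF | hF
    · simp [hF]
    · refine Filter.mem_of_superset (Filter.mem_atTop ((F.sup e) + 1)) ?_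
      intro n hn i hi
      exact lt_of_le_of_lt (Finset.le_sup hi) hn
  obtain ⟨n, hn1, hn2⟩ := (Filter.nonempty_of_mem (Filter.inter_mem hA hB2))
  simp only [Set.mem_iInter, Set.mem_setOf_eq] at hn1 hn2
  have hFS : F ⊆ S n := fun i hi => (hmemS i n).mpr (hn2 i hi)
  have := hcs n F hFS
  convert this using 1
  funext i
  show v i.1 (c i.1) = v i.1 (cs n i.1)
  rw [hn1 i.1 i.2]

end radoinf


section setup
variable {K : Type*} [Field K] {R : Type*} [Ring R] [Algebra K R]

lemma set_pow_finite {s : Set R} (hs : s.Finite) (n : ℕ) : (s ^ n : Set R).Finite := by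
  induction n with
  | zero => rw [pow_zero]; exact Set.finite_one
  | succ n ih => rw [pow_succ]; exact ih.mul hs

lemma set_pow_nonzero [NoZeroDivisors R] (h1 : (1 : R) ≠ 0) {s : Set R}
    (hs0 : ∀ x ∈ s, x ≠ 0) : ∀ n, ∀ x ∈ (s ^ n : Set R), x ≠ 0 := by
  intro n
  induction n with
  | zero => intro x hx; rw [pow_zero] at hx; rwa [Set.mem_one.mp hx]
  | succ n ih =>
    intro x hx
    rw [pow_succ] at hx
    obtain ⟨a, ha, b, hb, rfl⟩ := Set.mem_mul.mp hx
    exact mul_ne_zero (ih a ha) (hs0 b hb)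

lemma one_mem_set_pow {s : Set R} (h1 : (1 : R) ∈ s) (n : ℕ) : (1 : R) ∈ (s ^ n : Set R) := by
  induction n with
  | zero => rw [pow_zero]; exact Set.mem_one.mpr rfl
  | succ n ih => rw [pow_succ]; exact ⟨1, ih, 1, h1, mul_one 1⟩

lemma exists_gen [Algebra.FiniteType K R] (h1 : (1 : R) ≠ 0) :
    ∃ s : Set R, s.Finite ∧ (1 : R) ∈ s ∧ (∀ x ∈ s, x ≠ 0) ∧
      ∀ x : R, ∃ n, x ∈ (span K s) ^ n := by
  obtain ⟨s₀, hs₀⟩ := (inferInstance : Algebra.FiniteType K R).out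
  set s : Set R := insert (1 : R) {x ∈ (s₀ : Set R) | x ≠ 0} with hs
  have hfin : s.Finite := Set.Finite.insert _ (s₀.finite_toSet.subset (fun x hx => hx.1))
  have h1s : (1 : R) ∈ s := Set.mem_insert _ _
  have h0s : ∀ x ∈ s, x ≠ 0 := by
    intro x hx
    rcases hx with h | h
    · rw [h]; exact h1
    · exact h.2
  refine ⟨s, hfin, h1s, h0s, ?_⟩
  set T := span K s with hT
  have hT1 : (1 : R) ∈ T := subset_span h1s
  -- R = adjoin of s
  have hadj : Algebra.adjoin K s = ⊤ := by
    rw [eq_top_iff, ← hs₀]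
    apply Algebra.adjoin_le
    intro x hx
    by_cases hx0 : x = 0
    · rw [hx0]; exact Subalgebra.zero_mem _
    · exact Algebra.subset_adjoin (Set.mem_insert_of_mem _ ⟨hx, hx0⟩)
  intro x
  have hx : x ∈ Subalgebra.toSubmodule (Algebra.adjoin K s) := by
    rw [hadj]; trivial
  rw [Algebra.adjoin_eq_span] at hx
  refine Submodule.span_induction ?_ ?_ ?_ ?_ hx
  · -- elements of the monoid closure
    intro y hy
    refine Submonoid.closure_induction ?_ ?_ ?_ hy
    · intro z hz; exact ⟨1, by rw [pow_one]; exact subset_span hz⟩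
    · exact ⟨0, by rw [pow_zero]; exact Submodule.one_le.mp le_rfl⟩
    · rintro y z - - ⟨a, hya⟩ ⟨b, hzb⟩
      exact ⟨a + b, by rw [pow_add]; exact Submodule.mul_mem_mul hya hzb⟩
  · exact ⟨0, Submodule.zero_mem _⟩
  · rintro y z - - ⟨a, hya⟩ ⟨b, hzb⟩
    refine ⟨max a b, Submodule.add_mem _ ?_ ?_⟩
    · exact pow_mono' hT1 (le_max_left a b) hya
    · exact pow_mono' hT1 (le_max_right a b) hzb
  · rintro c y - ⟨a, hya⟩
    exact ⟨a, Submodule.smul_mem _ c hya⟩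

lemma ebig (hinf : ¬ FiniteDimensional K R) (T : Submodule K R)
    (hEfd : ∀ n : ℕ, FiniteDimensional K ↥(T ^ n)) (hT1 : (1 : R) ∈ T)
    (hEmem : ∀ x : R, ∃ n, x ∈ T ^ n) :
    ∀ D : ℕ, ∃ m, D ≤ finrank K ↥(T ^ m) := by
  intro D
  have hrank : (D : Cardinal) ≤ Module.rank K R := by
    have h := (not_iff_not.mpr (Module.rank_lt_aleph0_iff (R := K) (M := R))).mpr hinf
    rw [not_lt] at h
    exact le_trans (Cardinal.nat_lt_aleph0 D).le h
  obtain ⟨u, hucard, huind⟩ := le_rank_iff_exists_linearIndependent_finset.mp hrank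
  -- each element of u lies in some power of T
  choose g hg using fun x : ↥(u : Set R) => hEmem x.1
  have hfin : Fintype ↥(u : Set R) := FinsetCoe.fintype u
  set m := Finset.univ.sup fun x : ↥(u : Set R) => g x with hm
  refine ⟨m, ?_⟩
  haveI := hEfd m
  have hsub : span K (u : Set R) ≤ T ^ m := by
    rw [span_le]
    intro x hx
    exact pow_mono' hT1 (Finset.le_sup (Finset.mem_univ ⟨x, hx⟩)) (hg ⟨x, hx⟩)
  have hfr : finrank K (span K (u : Set R)) = D := by
    rw [finrank_span_finset_eq_card huind, hucard]
  rw [← hfr]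
  exact Submodule.finrank_mono hsub

lemma doubling [NoZeroDivisors R]
    (T : Submodule K R) (hT1 : (1 : R) ∈ T)
    (hEfd : ∀ n : ℕ, FiniteDimensional K ↥(T ^ n))
    {m₀ : ℕ}
    (hexp : ∀ V : Submodule K R, FiniteDimensional K ↥V → V ≠ ⊥ →
      (1 + 1 / (m₀ + 1)) * (finrank K ↥V : ℝ) ≤ finrank K ↥(V * T ^ m₀)) :
    ∃ M : ℕ, ∀ V : Submodule K R, FiniteDimensional K ↥V → V ≠ ⊥ →
      2 * finrank K ↥V ≤ finrank K ↥(V * T ^ M) := by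
  set c : ℝ := 1 + 1 / (m₀ + 1) with hc
  have hc1 : (1 : ℝ) < c := by
    have : (0:ℝ) < (m₀ : ℝ) + 1 := by positivity
    have : (0:ℝ) < 1 / ((m₀:ℝ) + 1) := by positivity
    simp only [hc]
    linarith
  have hc0 : (0 : ℝ) < c := lt_trans one_pos hc1
  -- iterate the expansion
  have hiter : ∀ k : ℕ, ∀ V : Submodule K R, FiniteDimensional K ↥V → V ≠ ⊥ →
      c ^ k * (finrank K ↥V : ℝ) ≤ finrank K ↥(V * T ^ (m₀ * k)) := by
    intro k
    induction k with
    | zero =>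
      intro V hfd hne
      rw [Nat.mul_zero, pow_zero, pow_zero, mul_one, one_mul]
    | succ k ih =>
      intro V hfd hne
      haveI := hfd
      haveI := hEfd (m₀ * k)
      haveI hWfd : FiniteDimensional K ↥(V * T ^ (m₀ * k)) := fd_mul _ _
      have hVle : V ≤ V * T ^ (m₀ * k) := by
        intro x hx
        simpa using Submodule.mul_mem_mul hx (one_mem_pow hT1 (m₀ * k))
      have hWne : V * T ^ (m₀ * k) ≠ ⊥ := by
        obtain ⟨w, hw, hw0⟩ := Submodule.exists_mem_ne_zero_of_ne_bot hne
        exact Submodule.ne_bot_iff _ |>.mpr ⟨w, hVle hw, hw0⟩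
      have heq : V * T ^ (m₀ * (k + 1)) = (V * T ^ (m₀ * k)) * T ^ m₀ := by
        rw [Nat.mul_succ, pow_add, mul_assoc]
      have h1 := hexp (V * T ^ (m₀ * k)) hWfd hWne
      have h2 := ih V hfd hne
      rw [heq]
      calc c ^ (k + 1) * (finrank K ↥V : ℝ)
          = c * (c ^ k * finrank K ↥V) := by ring
        _ ≤ c * finrank K ↥(V * T ^ (m₀ * k)) := by nlinarith
        _ ≤ finrank K ↥((V * T ^ (m₀ * k)) * T ^ m₀) := h1
  obtain ⟨k, hk⟩ := pow_unbounded_of_one_lt (2 : ℝ) hc1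
  refine ⟨m₀ * k, ?_⟩
  intro V hfd hne
  have h := hiter k V hfd hne
  have : (2 : ℝ) * finrank K ↥V ≤ finrank K ↥(V * T ^ (m₀ * k)) := by
    have h0 : (0:ℝ) ≤ (finrank K ↥V : ℝ) := by positivity
    nlinarith
  exact_mod_cast this

end setup


/-- An infinite dimensional affine algebra without zero divisors which is not amenable is
paradoxical. -/
theorem nonamenable_paradoxical (K : Type*) [Field K] (R : Type*) [Ring R] [Algebra K R]
    [Algebra.FiniteType K R] [NoZeroDivisors R]
    (hinf : ¬ FiniteDimensional K R)
    (hR : ¬ AmenableAlgebra K R) :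
    ParadoxicalAlgebra K R := by
  classical
  haveI hnontriv : Nontrivial R := by
    by_contra h
    rw [not_nontrivial_iff_subsingleton] at h
    exact hinf (Module.finite_def.mpr ⟨∅, Subsingleton.elim _ _⟩)
  obtain ⟨s, hsfin, hs1, hs0, hexh⟩ := exists_gen (K := K) (R := R) one_ne_zero
  set T : Submodule K R := span K s with hTdef
  have hT1 : (1 : R) ∈ T := subset_span hs1
  have hEfd : ∀ n, FiniteDimensional K ↥(T ^ n) := by
    intro n
    rw [hTdef, span_pow]
    exact FiniteDimensional.span_of_finite K (set_pow_finite hsfin n)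
  -- uniform expansion from non-amenability
  have hexp : ∃ m₀ : ℕ, ∀ V : Submodule K R, FiniteDimensional K ↥V → V ≠ ⊥ →
      (1 + 1 / (m₀ + 1)) * (finrank K ↥V : ℝ) ≤ finrank K ↥(V * T ^ m₀) := by
    by_contra hcon
    push_neg at hcon
    exact hR (build_amenable T hT1 hEfd hexh (ebig hinf T hEfd hT1 hexh) hcon)
  obtain ⟨m₀, hexp⟩ := hexp
  obtain ⟨M, hdbl⟩ := doubling T hT1 hEfd hexp
  -- the monomials spanning T ^ M
  have hfinM : ((s ^ M : Set R)).Finite := set_pow_finite hsfin M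
  set Mfin : Finset R := hfinM.toFinset with hMfin
  set t := Mfin.card with ht
  set p : Fin t → R := fun j => (Mfin.equivFin.symm j : R) with hp
  have hp0 : ∀ j, p j ≠ 0 := by
    intro j
    apply set_pow_nonzero one_ne_zero hs0 M
    exact (hfinM.mem_toFinset).mp (Mfin.equivFin.symm j).2
  have hPspan : T ^ M = span K (Mfin : Set R) := by
    rw [hTdef, span_pow, hMfin, Set.Finite.coe_toFinset]
  intro f
  -- the Rado condition
  have hrado : ∀ F : Finset (ℕ × Bool), F.card ≤ finrank K (span K
      ((F.biUnion fun i => Finset.univ.image fun j => f i.1 * p j) : Set R)) := by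
    intro F
    rcases F.eq_empty_or_nonempty with rfl | hFne
    · simp
    set G := F.image Prod.fst with hG
    have hGne : G.Nonempty := hFne.image _
    set W : Submodule K R := span K ((G.image f : Finset R) : Set R) with hW
    haveI hWfd : FiniteDimensional K ↥W := FiniteDimensional.span_finset K _
    have hWrank : finrank K ↥W = G.card := by
      have hind : LinearIndependent K (fun i : ↥G => f (i : ℕ)) :=
        f.linearIndependent.comp _ Subtype.val_injective
      have hr := finrank_span_eq_card hind
      have hrange : Set.range (fun i : ↥G => f (i : ℕ)) = ((G.image f : Finset R) : Set R) := by
        ext z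
        constructor
        · rintro ⟨⟨a, ha⟩, rfl⟩
          exact Finset.mem_coe.mpr (Finset.mem_image_of_mem f ha)
        · intro hz
          rw [Finset.mem_coe, Finset.mem_image] at hz
          obtain ⟨a, ha, rfl⟩ := hz
          exact ⟨⟨a, ha⟩, rfl⟩
      rw [hrange] at hr
      rw [← hW] at hr
      rw [hr, Fintype.card_coe]
    have hWne : W ≠ ⊥ := by
      obtain ⟨a, ha⟩ := hGne
      refine (Submodule.ne_bot_iff W).mpr ⟨f a, ?_, f.ne_zero a⟩
      exact subset_span (by simpa using Finset.mem_image_of_mem f ha)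
    haveI := hEfd M
    haveI : FiniteDimensional K ↥(W * T ^ M) := fd_mul _ _
    have hsub : W * T ^ M ≤ span K
        ((F.biUnion fun i => Finset.univ.image fun j => f i.1 * p j) : Set R) := by
      rw [hW, hPspan, span_mul_span]
      rw [span_le]
      rintro z hz
      rw [Set.mem_mul] at hz
      obtain ⟨x, hx, y, hy, rfl⟩ := hz
      rw [Finset.mem_coe, Finset.mem_image] at hx
      obtain ⟨a, haG, rfl⟩ := hx
      rw [hG, Finset.mem_image] at haG
      obtain ⟨i, hiF, hia⟩ := haG
      rw [Finset.mem_coe] at hy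
      have hyp : p (Mfin.equivFin ⟨y, hy⟩) = y := by
        show ((Mfin.equivFin.symm (Mfin.equivFin ⟨y, hy⟩) : ↥Mfin) : R) = y
        rw [Equiv.symm_apply_apply]
      apply subset_span
      rw [Finset.mem_coe, Finset.mem_biUnion]
      refine ⟨i, hiF, ?_⟩
      rw [Finset.mem_image]
      exact ⟨Mfin.equivFin ⟨y, hy⟩, Finset.mem_univ _, by rw [hyp, hia]⟩
    have hcard : F.card ≤ 2 * G.card := by
      have hsubF : F ⊆ G ×ˢ (Finset.univ : Finset Bool) := by
        intro ib hib
        rw [Finset.mem_product]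
        exact ⟨Finset.mem_image_of_mem _ hib, Finset.mem_univ _⟩
      calc F.card ≤ (G ×ˢ (Finset.univ : Finset Bool)).card := Finset.card_le_card hsubF
        _ = G.card * 2 := by rw [Finset.card_product]; simp
        _ = 2 * G.card := by ring
    calc F.card ≤ 2 * G.card := hcard
      _ = 2 * finrank K ↥W := by rw [hWrank]
      _ ≤ finrank K ↥(W * T ^ M) := hdbl W hWfd hWne
      _ ≤ finrank K (span K
            ((F.biUnion fun i => Finset.univ.image fun j => f i.1 * p j) : Set R)) :=
          Submodule.finrank_mono hsub
  obtain ⟨c, hc⟩ := rado_infinite (fun (i : ℕ × Bool) (j : Fin t) => f i.1 * p j) hrado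
  -- assemble the paradoxical decomposition
  refine ⟨t * t, fun q => {i : ℕ | finProdFinEquiv (c (i, true), c (i, false)) = q},
    fun q => p (finProdFinEquiv.symm q).1, fun q => p (finProdFinEquiv.symm q).2,
    fun q => hp0 _, fun q => hp0 _, ?_, ?_, ?_⟩
  · ext i
    simp only [Set.mem_iUnion, Set.mem_setOf_eq, Set.mem_univ, iff_true]
    exact ⟨finProdFinEquiv (c (i, true), c (i, false)), rfl⟩
  · intro q q' hqq'
    simp only [Function.onFun]
    rw [Set.disjoint_left]
    intro i hi hi'
    have hi2 : finProdFinEquiv (c (i, true), c (i, false)) = q := hi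
    have hi2' : finProdFinEquiv (c (i, true), c (i, false)) = q' := hi'
    exact hqq' (hi2.symm.trans hi2')
  · set A : Fin (t * t) → Set ℕ :=
      fun q => {i : ℕ | finProdFinEquiv (c (i, true), c (i, false)) = q} with hA
    set φ : ((q : Fin (t * t)) × (↥(A q) × Bool)) → ℕ × Bool :=
      fun x => ((x.2.1 : ℕ), x.2.2) with hφ
    have hinj : Function.Injective φ := by
      rintro ⟨q, ⟨⟨i, hi⟩, b⟩⟩ ⟨q', ⟨⟨i', hi'⟩, b'⟩⟩ hxy
      simp only [hφ, Prod.mk.injEq] at hxy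
      obtain ⟨hii, hbb⟩ := hxy
      subst hii
      subst hbb
      have hi2 : finProdFinEquiv (c (i, true), c (i, false)) = q := hi
      have hi2' : finProdFinEquiv (c (i, true), c (i, false)) = q' := hi'
      have hq : q = q' := hi2.symm.trans hi2'
      subst hq
      rfl
    have hval : (fun x : ((q : Fin (t * t)) × (↥(A q) × Bool)) =>
        f ((x.2.1 : ℕ)) * (cond x.2.2 (p (finProdFinEquiv.symm x.1).1)
          (p (finProdFinEquiv.symm x.1).2)))
        = (fun i : ℕ × Bool => f i.1 * p (c i)) ∘ φ := by
      funext x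
      obtain ⟨q, ⟨⟨i, hi⟩, b⟩⟩ := x
      have hi2 : finProdFinEquiv (c (i, true), c (i, false)) = q := hi
      simp only [hφ, Function.comp]
      rw [← hi2, Equiv.symm_apply_apply]
      cases b
      · rfl
      · rfl
    exact hval ▸ hc.comp φ hinj
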